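/- For a minimum-length covering strategy S = (W_1,...,W_k) of a tree T, the length of S equals the sum over i of the lengths of the paths P(W_i) plus twice the number of vertices of T not lying on any of the paths P(W_i). -/

import Mathlib

open Finset

variable {V : Type*}

/-- The list of consecutive steps of a walk given as a list of vertices. -/
def wsteps (W : List V) : List (V × V) := W.zip W.tail

/-- A walk on a graph: a nonempty list of vertices in which consecutive
entries are equal or adjacent. -/
def IsWalk (G : SimpleGraph V) (W : List V) : Prop :=
  W ≠ [] ∧ ∀ p ∈ wsteps W, p.1 = p.2 ∨ G.Adj p.1 p.2

/-- The length of a walk: the number of position-changing moves. -/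
def wlen [DecidableEq V] (W : List V) : ℕ :=
  (wsteps W).countP (fun p => decide (p.1 ≠ p.2))

/-- The number of times a walk traverses the edge `{x, y}` (in either direction). -/
def trav [DecidableEq V] (W : List V) (x y : V) : ℕ :=
  (wsteps W).countP (fun p => decide ((p.1 = x ∧ p.2 = y) ∨ (p.1 = y ∧ p.2 = x)))

/-- The number of times a walk traverses the edge `(x, y)` from `x` to `y`. -/
def dirTrav [DecidableEq V] (W : List V) (x y : V) : ℕ :=
  (wsteps W).countP (fun p => decide (p.1 = x ∧ p.2 = y))

/-- A tuple of walks covers the graph: every vertex appears in some walk. -/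
def Covers {k : ℕ} (S : Fin k → List V) : Prop := ∀ v : V, ∃ i, v ∈ S i

/-- The total length of a strategy: the sum of the lengths of the walks. -/
def slen [DecidableEq V] {k : ℕ} (S : Fin k → List V) : ℕ := ∑ i, wlen (S i)

/-- A minimum-length covering strategy: a tuple of walks covering all vertices whose
total length is no larger than that of any covering strategy with the same starts. -/
def IsMinCover [DecidableEq V] (G : SimpleGraph V) {k : ℕ} (S : Fin k → List V) : Prop :=
  (∀ i, IsWalk G (S i)) ∧ Covers S ∧
    ∀ S' : Fin k → List V, (∀ i, IsWalk G (S' i)) → Covers S' →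
      (∀ i, (S' i).head? = (S i).head?) → slen S ≤ slen S'

/-! ### Auxiliary lemmas on steps of walks -/

lemma wsteps_nil : wsteps ([] : List V) = [] := rfl
lemma wsteps_single (a : V) : wsteps [a] = [] := rfl
lemma wsteps_cons₂ (a b : V) (l : List V) :
    wsteps (a :: b :: l) = (a, b) :: wsteps (b :: l) := rfl

lemma mem_of_mem_wsteps : ∀ (l : List V) (p : V × V), p ∈ wsteps l → p.1 ∈ l ∧ p.2 ∈ l
  | [], p, h => by simp [wsteps_nil] at h
  | [a], p, h => by simp [wsteps_single] at h
  | a :: b :: l, p, h => by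
    rw [wsteps_cons₂] at h
    rcases List.mem_cons.1 h with h | h
    · subst h; simp
    · have := mem_of_mem_wsteps (b :: l) p h
      exact ⟨List.mem_cons_of_mem _ this.1, List.mem_cons_of_mem _ this.2⟩

lemma wsteps_split : ∀ (A : List V) (w : V) (B : List V),
    wsteps (A ++ w :: B) = wsteps (A ++ [w]) ++ wsteps (w :: B)
  | [], w, B => by simp [wsteps_single]
  | [a], w, B => by simp [wsteps_cons₂, wsteps_single]
  | a :: a' :: A, w, B => by
    have h := wsteps_split (a' :: A) w B
    simp only [List.cons_append, wsteps_cons₂] at *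
    rw [h]

lemma chain'_steps {R : V → V → Prop} :
    ∀ l : List V, l.Chain' R → ∀ p ∈ wsteps l, R p.1 p.2
  | [], _, p, hp => by simp [wsteps_nil] at hp
  | [a], _, p, hp => by simp [wsteps_single] at hp
  | a :: b :: l, h, p, hp => by
    simp only [List.Chain', List.isChain_cons_cons] at h
    rw [wsteps_cons₂] at hp
    rcases List.mem_cons.1 hp with hp | hp
    · subst hp; exact h.1
    · exact chain'_steps (b :: l) h.2 p hp

/-! ### Traversal counts indexed by unordered edges -/

/-- The number of times a walk traverses the unordered edge `e`. -/
def etrav [DecidableEq V] (W : List V) (e : Sym2 V) : ℕ :=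
  (wsteps W).countP (fun p => decide (s(p.1, p.2) = e))

lemma trav_eq_etrav [DecidableEq V] (W : List V) (x y : V) :
    trav W x y = etrav W s(x, y) := by
  unfold trav etrav
  apply List.countP_congr
  intro p _
  simp only [decide_eq_decide, Sym2.eq_iff]

lemma etrav_nil [DecidableEq V] (e : Sym2 V) : etrav ([] : List V) e = 0 := rfl
lemma etrav_single [DecidableEq V] (a : V) (e : Sym2 V) : etrav [a] e = 0 := rfl

lemma etrav_cons₂ [DecidableEq V] (a b : V) (l : List V) (e : Sym2 V) :
    etrav (a :: b :: l) e = etrav (b :: l) e + (if s(a, b) = e then 1 else 0) := by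
  unfold etrav
  rw [wsteps_cons₂, List.countP_cons]
  simp

lemma wlen_cons₂ [DecidableEq V] (a b : V) (l : List V) :
    wlen (a :: b :: l) = wlen (b :: l) + (if a = b then 0 else 1) := by
  unfold wlen
  rw [wsteps_cons₂, List.countP_cons]
  by_cases h : a = b <;> simp [h]

lemma wlen_eq_sum_etrav [DecidableEq V] (G : SimpleGraph V) [Fintype V] [DecidableRel G.Adj] :
    ∀ W : List V, (∀ p ∈ wsteps W, p.1 = p.2 ∨ G.Adj p.1 p.2) →
      wlen W = ∑ e ∈ G.edgeFinset, etrav W e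
  | [], _ => by simp [wlen, wsteps_nil, etrav_nil]
  | [a], _ => by simp [wlen, wsteps_single, etrav_single]
  | a :: b :: l, h => by
    have IH := wlen_eq_sum_etrav G (b :: l) (fun p hp => h p (by
      rw [wsteps_cons₂]; exact List.mem_cons_of_mem _ hp))
    rw [wlen_cons₂, IH]
    have hsum : ∑ e ∈ G.edgeFinset, etrav (a :: b :: l) e =
        (∑ e ∈ G.edgeFinset, etrav (b :: l) e) +
          ∑ e ∈ G.edgeFinset, (if s(a, b) = e then 1 else 0) := by
      rw [← Finset.sum_add_distrib]
      exact Finset.sum_congr rfl fun e _ => etrav_cons₂ a b l e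
    rw [hsum, Finset.sum_ite_eq G.edgeFinset s(a, b) (fun _ => 1)]
    by_cases hab : a = b
    · have : s(a, b) ∉ G.edgeFinset := by
        rw [SimpleGraph.mem_edgeFinset, SimpleGraph.mem_edgeSet, hab]
        exact G.irrefl
      simp [hab, this]
    · have hadj : G.Adj a b := by
        rcases h (a, b) (by rw [wsteps_cons₂]; exact List.mem_cons_self) with h' | h'
        · exact absurd h' hab
        · exact h'
      have : s(a, b) ∈ G.edgeFinset := by
        rw [SimpleGraph.mem_edgeFinset, SimpleGraph.mem_edgeSet]; exact hadj
      simp [hab, this]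

lemma etrav_le_one [DecidableEq V] :
    ∀ (l : List V), l.Nodup → ∀ (x y : V), etrav l s(x, y) ≤ 1
  | [], _, x, y => by simp [etrav_nil]
  | [a], _, x, y => by simp [etrav_single]
  | a :: b :: l, hnd, x, y => by
    have hnd' : (b :: l).Nodup := hnd.of_cons
    have ha : a ∉ b :: l := (List.nodup_cons.1 hnd).1
    rw [etrav_cons₂]
    by_cases he : s(a, b) = s(x, y)
    · have h0 : etrav (b :: l) s(x, y) = 0 := by
        unfold etrav
        rw [List.countP_eq_zero]
        intro p hp
        simp only [decide_eq_true_eq]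
        intro heq
        rw [← he, Sym2.eq_iff] at heq
        have hm := mem_of_mem_wsteps (b :: l) p hp
        rcases heq with ⟨h1, _⟩ | ⟨_, h2⟩
        · exact ha (h1 ▸ hm.1)
        · exact ha (h2 ▸ hm.2)
      simp [he, h0]
    · have := etrav_le_one (b :: l) hnd' x y
      simp only [he, if_false]
      omega

lemma wlen_chain_eq_card [DecidableEq V] (G : SimpleGraph V) [Fintype V] [DecidableRel G.Adj]
    (l : List V) (hnd : l.Nodup)
    (hsteps : ∀ p ∈ wsteps l, p.1 = p.2 ∨ G.Adj p.1 p.2) :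
    wlen l = (G.edgeFinset.filter (fun e => etrav l e = 1)).card := by
  rw [wlen_eq_sum_etrav G l hsteps, Finset.card_filter]
  refine Finset.sum_congr rfl fun e he => ?_
  revert he
  induction e using Sym2.ind with
  | _ x y =>
    intro he
    have h1 : etrav l s(x, y) ≤ 1 := etrav_le_one l hnd x y
    by_cases h : etrav l s(x, y) = 1 <;> simp [h] <;> omega

/-! ### Walks must cross bridges separating their vertices -/

lemma reach_of_no_cross (G : SimpleGraph V) (x y : V) :
    ∀ W : List V, (∀ p ∈ wsteps W, p.1 = p.2 ∨ G.Adj p.1 p.2) →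
      (∀ p ∈ wsteps W, s(p.1, p.2) ≠ s(x, y)) →
      ∀ a ∈ W, ∀ b ∈ W, (G.deleteEdges {s(x, y)}).Reachable a b
  | [], _, _, a, ha, b, hb => by simp at ha
  | [c], _, _, a, ha, b, hb => by
    simp at ha hb; rw [ha, hb]
  | c :: d :: l, hW, hno, a, ha, b, hb => by
    have hW' : ∀ p ∈ wsteps (d :: l), p.1 = p.2 ∨ G.Adj p.1 p.2 := fun p hp =>
      hW p (by rw [wsteps_cons₂]; exact List.mem_cons_of_mem _ hp)
    have hno' : ∀ p ∈ wsteps (d :: l), s(p.1, p.2) ≠ s(x, y) := fun p hp =>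
      hno p (by rw [wsteps_cons₂]; exact List.mem_cons_of_mem _ hp)
    have IH := reach_of_no_cross G x y (d :: l) hW' hno'
    have hcd : (G.deleteEdges {s(x, y)}).Reachable c d := by
      rcases hW (c, d) (by rw [wsteps_cons₂]; exact List.mem_cons_self) with h | h
      · have h' : c = d := h
        rw [h']
      · refine SimpleGraph.Adj.reachable ?_
        rw [SimpleGraph.deleteEdges_adj]
        exact ⟨h, by
          simpa using hno (c, d) (by rw [wsteps_cons₂]; exact List.mem_cons_self)⟩
    rcases List.mem_cons.1 ha with ha | ha <;> rcases List.mem_cons.1 hb with hb | hb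
    · rw [ha, hb]
    · rw [ha]; exact hcd.trans (IH d (List.mem_cons_self) b hb)
    · rw [hb]; exact (IH a ha d (List.mem_cons_self)).trans hcd.symm
    · exact IH a ha b hb

lemma one_le_etrav_of_sep [DecidableEq V] {G : SimpleGraph V} (hT : G.IsTree)
    (W : List V) (hW : IsWalk G W) {v y : V} (hadj : G.Adj v y)
    (q : G.Walk y (W.head hW.1)) (hp : (SimpleGraph.Walk.cons hadj q).IsPath)
    (hv : v ∈ W) : 1 ≤ etrav W s(v, y) := by
  by_contra hcon
  have h0 : etrav W s(v, y) = 0 := by omega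
  have hno : ∀ p ∈ wsteps W, s(p.1, p.2) ≠ s(v, y) := by
    unfold etrav at h0
    rw [List.countP_eq_zero] at h0
    intro p hp' heq
    exact absurd (by simpa using heq) (by simpa using h0 p hp')
  have hreach := reach_of_no_cross G v y W hW.2 hno (W.head hW.1)
    (List.head_mem hW.1) v hv
  set H := G.deleteEdges {s(v, y)} with hH
  obtain ⟨wH⟩ := hreach
  have hsub : ∀ e ∈ wH.edges, e ∈ G.edgeSet := fun e he =>
    SimpleGraph.edgeSet_mono (SimpleGraph.deleteEdges_le _) (wH.edges_subset_edgeSet he)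
  let wG := wH.transfer G hsub
  let pp : G.Path v (W.head hW.1) := wG.toPath.reverse
  have huniq : (⟨SimpleGraph.Walk.cons hadj q, hp⟩ : G.Path v (W.head hW.1)) = pp :=
    hT.IsAcyclic.path_unique _ _
  have hmem : s(v, y) ∈ (pp : G.Walk v (W.head hW.1)).edges := by
    rw [← congrArg Subtype.val huniq]
    simp [SimpleGraph.Walk.edges_cons]
  have hmem2 : s(v, y) ∈ (wG.toPath : G.Walk (W.head hW.1) v).edges := by
    have heq : (pp : G.Walk v (W.head hW.1)).edges
        = (wG.toPath : G.Walk (W.head hW.1) v).edges.reverse := by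
      simp [pp, SimpleGraph.Path.reverse, SimpleGraph.Walk.edges_reverse]
    rw [heq, List.mem_reverse] at hmem
    exact hmem
  have hmem3 : s(v, y) ∈ wG.edges := SimpleGraph.Walk.edges_bypass_subset _ hmem2
  have hmem4 : s(v, y) ∈ wH.edges := by
    rwa [SimpleGraph.Walk.edges_transfer] at hmem3
  have hfin := wH.edges_subset_edgeSet hmem4
  rw [SimpleGraph.mem_edgeSet, SimpleGraph.deleteEdges_adj] at hfin
  exact hfin.2 rfl

/-! ### Extending a strategy to cover everything, two moves per new vertex -/

lemma frontier_of_walk (G : SimpleGraph V) (C : V → Prop) :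
    ∀ {x c : V}, G.Walk x c → ¬C x → C c → ∃ u w, ¬C u ∧ C w ∧ G.Adj u w := by
  intro x c p
  induction p with
  | nil => intro h h'; exact absurd h' h
  | @cons a b c h q ih =>
    intro hx hc
    by_cases hb : C b
    · exact ⟨a, b, hx, hb, h⟩
    · exact ih hb hc

lemma head?_insert (A : List V) (w : V) (X Y : List V) :
    (A ++ w :: X).head? = (A ++ w :: Y).head? := by
  cases A <;> simp

lemma isWalk_insert (G : SimpleGraph V) (A : List V) (w u : V) (B : List V)
    (hW : IsWalk G (A ++ w :: B)) (hadj : G.Adj w u) :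
    IsWalk G (A ++ w :: u :: w :: B) := by
  constructor
  · simp
  · intro p hp
    rw [wsteps_split A w (u :: w :: B), List.mem_append] at hp
    rcases hp with hp | hp
    · exact hW.2 p (by
        rw [wsteps_split A w B, List.mem_append]; exact Or.inl hp)
    · rw [wsteps_cons₂, wsteps_cons₂] at hp
      rcases List.mem_cons.1 hp with hp | hp
      · subst hp; exact Or.inr hadj
      · rcases List.mem_cons.1 hp with hp | hp
        · subst hp; exact Or.inr hadj.symm
        · exact hW.2 p (by
            rw [wsteps_split A w B, List.mem_append]; exact Or.inr hp)

lemma wlen_insert [DecidableEq V] (A : List V) (w u : V) (B : List V) (hne : u ≠ w) :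
    wlen (A ++ w :: u :: w :: B) = wlen (A ++ w :: B) + 2 := by
  unfold wlen
  rw [wsteps_split A w (u :: w :: B), wsteps_split A w B, List.countP_append,
    List.countP_append, wsteps_cons₂, wsteps_cons₂, List.countP_cons, List.countP_cons]
  simp [hne, Ne.symm hne]
  omega

lemma cover_extend [Fintype V] [DecidableEq V] (G : SimpleGraph V) {k : ℕ}
    (hconn : G.Preconnected) (hk : Nonempty (Fin k)) :
    ∀ (n : ℕ) (Q : Fin k → List V), (∀ i, IsWalk G (Q i)) →
    ∀ U : Finset V, (∀ v : V, v ∈ U ↔ ∀ i, v ∉ Q i) → U.card ≤ n →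
    ∃ Q' : Fin k → List V, (∀ i, IsWalk G (Q' i)) ∧ Covers Q' ∧
      (∀ i, (Q' i).head? = (Q i).head?) ∧ slen Q' ≤ slen Q + 2 * n := by
  intro n
  induction n with
  | zero =>
    intro Q hQ U hU hcard
    refine ⟨Q, hQ, fun v => ?_, fun i => rfl, by omega⟩
    have hvU : v ∉ U := by
      intro hv
      have := Finset.card_pos.2 ⟨v, hv⟩
      omega
    rw [hU] at hvU
    push_neg at hvU
    exact hvU
  | succ n ih =>
    intro Q hQ U hU hcard
    by_cases hUe : U = ∅
    · obtain ⟨Q', h1, h2, h3, h4⟩ := ih Q hQ U hU (by simp [hUe])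
      exact ⟨Q', h1, h2, h3, by omega⟩
    · obtain ⟨x, hx⟩ := Finset.nonempty_iff_ne_empty.2 hUe
      set C : V → Prop := fun z => ∃ i, z ∈ Q i with hC
      have hCx : ¬C x := by
        rw [hU] at hx
        rintro ⟨i, hi⟩
        exact hx i hi
      obtain ⟨i0⟩ := hk
      have hChead : C ((Q i0).head (hQ i0).1) := ⟨i0, List.head_mem _⟩
      obtain ⟨u, w, hu, hw, hadj⟩ :=
        frontier_of_walk G C ((hconn x _).some) hCx hChead
      obtain ⟨i, hwi⟩ := hw
      obtain ⟨A, B, hAB⟩ := List.append_of_mem hwi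
      have huU : u ∈ U := by
        rw [hU]; intro j hj; exact hu ⟨j, hj⟩
      have hune : u ≠ w := fun h => hu (h ▸ ⟨i, hwi⟩)
      set L : List V := A ++ w :: u :: w :: B with hL
      set Q' : Fin k → List V := Function.update Q i L with hQ'
      have hQ'i : Q' i = L := Function.update_self i L Q
      have hQ'j : ∀ j, j ≠ i → Q' j = Q j := fun j hj => Function.update_of_ne hj L Q
      have hwalks : ∀ j, IsWalk G (Q' j) := by
        intro j
        by_cases hj : j = i
        · subst hj; rw [hQ'i]
          exact isWalk_insert G A w u B (hAB ▸ hQ j) hadj.symm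
        · rw [hQ'j j hj]; exact hQ j
      have hheads : ∀ j, (Q' j).head? = (Q j).head? := by
        intro j
        by_cases hj : j = i
        · subst hj; rw [hQ'i, hAB]; exact head?_insert A w (u :: w :: B) B
        · rw [hQ'j j hj]
      have hwlenL : wlen L = wlen (Q i) + 2 := by
        rw [hL, hAB]; exact wlen_insert A w u B hune
      have hslen : slen Q' = slen Q + 2 := by
        have e1 : slen Q' = ∑ j, Function.update (fun j => wlen (Q j)) i (wlen L) j :=
          Finset.sum_congr rfl (fun j _ => by
            by_cases hj : j = i
            · subst hj; rw [hQ'i, Function.update_self]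
            · rw [hQ'j j hj, Function.update_of_ne hj])
        rw [e1, Finset.sum_update_of_mem (Finset.mem_univ i), hwlenL]
        have e2 : slen Q = ∑ j ∈ Finset.univ \ {i}, wlen (Q j) + wlen (Q i) :=
          Finset.sum_eq_sum_sdiff_singleton_add (Finset.mem_univ i) _
        omega
      set U' : Finset V := U.erase u with hU'
      have hU'spec : ∀ v : V, v ∈ U' ↔ ∀ j, v ∉ Q' j := by
        intro v
        rw [hU', Finset.mem_erase, hU]
        constructor
        · rintro ⟨hvu, hv⟩ j
          by_cases hj : j = i
          · subst hj; rw [hQ'i, hL]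
            intro hmem
            simp only [List.mem_append, List.mem_cons] at hmem
            have hvQ : v ∉ Q j := hv j
            rw [hAB] at hvQ
            simp only [List.mem_append, List.mem_cons] at hvQ
            tauto
          · rw [hQ'j j hj]; exact hv j
        · intro h
          constructor
          · intro hvu
            apply h i
            rw [hQ'i, hL, hvu]
            simp
          · intro j hvj
            apply h j
            by_cases hj : j = i
            · subst hj; rw [hQ'i, hL]
              rw [hAB] at hvj
              simp only [List.mem_append, List.mem_cons] at hvj ⊢
              tauto
            · rwa [hQ'j j hj]
      have hcard' : U'.card ≤ n := by
        rw [hU', Finset.card_erase_of_mem huU]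
        omega
      obtain ⟨Q'', h1, h2, h3, h4⟩ := ih Q' hwalks U' hU'spec hcard'
      refine ⟨Q'', h1, h2, fun j => (h3 j).trans (hheads j), ?_⟩
      omega

/-- Cost formula: the length of a minimum-length covering strategy equals the sum
of the lengths of the paths P(Wᵢ) plus twice the number of vertices not on any path. -/
theorem stmt6 {V : Type*} [Fintype V] [DecidableEq V] (G : SimpleGraph V) (hT : G.IsTree)
    {k : ℕ} (S P : Fin k → List V) (hS : IsMinCover G S)
    (hP : ∀ i, (P i).Nodup ∧ (P i).Chain' G.Adj ∧ (P i).head? = (S i).head? ∧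
      (∀ x ∈ P i, x ∈ S i) ∧
      ∀ x y : V, G.Adj x y → (trav (S i) x y = 1 ↔ trav (P i) x y = 1)) :
    slen S = (∑ i, wlen (P i)) +
      2 * (Finset.univ.filter (fun v : V => ∀ i, v ∉ P i)).card := by
  rcases isEmpty_or_nonempty V with hV | hV
  · have hnil : ∀ l : List V, l = [] := fun l => match l with
      | [] => rfl
      | a :: _ => isEmptyElim a
    have h1 : slen S = 0 := Finset.sum_eq_zero (fun i _ => by rw [hnil (S i)]; rfl)
    have h2 : (∑ i, wlen (P i)) = 0 := Finset.sum_eq_zero (fun i _ => by rw [hnil (P i)]; rfl)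
    have h3 : (Finset.univ.filter (fun v : V => ∀ i, v ∉ P i)).card = 0 := by
      simp [Finset.univ_eq_empty]
    rw [h1, h2, h3]
  · haveI : DecidableRel G.Adj := fun a b => Classical.dec _
    obtain ⟨v0⟩ := hV
    obtain ⟨i0, -⟩ := hS.2.1 v0
    set U := Finset.univ.filter (fun v : V => ∀ i, v ∉ P i) with hUdef
    have hUmem : ∀ v : V, v ∈ U ↔ ∀ i, v ∉ P i := by
      intro v; rw [hUdef, Finset.mem_filter]; simp
    have hSwalk := hS.1
    have hPne : ∀ i, P i ≠ [] := by
      intro i h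
      have h' := (hP i).2.2.1
      rw [h] at h'
      exact (hSwalk i).1 (List.head?_eq_none_iff.1 h'.symm)
    have hPwalk : ∀ i, IsWalk G (P i) := fun i =>
      ⟨hPne i, fun p hp => Or.inr (chain'_steps (P i) (hP i).2.1 p hp)⟩
    -- upper bound via minimality and `cover_extend`
    have hupper : slen S ≤ (∑ i, wlen (P i)) + 2 * U.card := by
      obtain ⟨Q', h1, h2, h3, h4⟩ := cover_extend G hT.isConnected.preconnected ⟨i0⟩ U.card
        P hPwalk U hUmem le_rfl
      exact (hS.2.2 Q' h1 h2 (fun i => (h3 i).trans (hP i).2.2.1)).trans h4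
    -- decomposition of the length of each walk over edges
    set E1 : Fin k → Finset (Sym2 V) :=
      (fun i => G.edgeFinset.filter (fun e => etrav (S i) e = 1)) with hE1
    have hslen : slen S
        = (∑ i, wlen (P i)) + ∑ i, ∑ e ∈ G.edgeFinset \ E1 i, etrav (S i) e := by
      rw [← Finset.sum_add_distrib]
      refine Finset.sum_congr rfl (fun i _ => ?_)
      have hEP : E1 i = G.edgeFinset.filter (fun e => etrav (P i) e = 1) := by
        rw [hE1]
        apply Finset.filter_congr
        intro e he
        revert he
        induction e using Sym2.ind with
        | _ x y =>
          intro he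
          have hadj : G.Adj x y := by
            rwa [SimpleGraph.mem_edgeFinset, SimpleGraph.mem_edgeSet] at he
          rw [← trav_eq_etrav, ← trav_eq_etrav]
          exact (hP i).2.2.2.2 x y hadj
      have hcardE : (E1 i).card = wlen (P i) := by
        rw [hEP, ← wlen_chain_eq_card G (P i) (hP i).1 (hPwalk i).2]
      have hsum1 : ∑ e ∈ E1 i, etrav (S i) e = (E1 i).card := by
        rw [Finset.card_eq_sum_ones]
        refine Finset.sum_congr rfl (fun e he => ?_)
        rw [hE1] at he
        exact (Finset.mem_filter.1 he).2
      have hW := wlen_eq_sum_etrav G (S i) (hSwalk i).2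
      rw [hW, ← Finset.sum_sdiff (Finset.filter_subset _ _ : E1 i ⊆ G.edgeFinset)]
      rw [hsum1, hcardE]
      ring
    -- lower bound: every uncovered vertex forces two traversals of a non-path edge
    have hlow : 2 * U.card ≤ ∑ i, ∑ e ∈ G.edgeFinset \ E1 i, etrav (S i) e := by
      set hd : Fin k → V := fun i => (S i).head ((hSwalk i).1) with hhd
      have key : ∀ v : V, ∃ p : (Σ _ : Fin k, Sym2 V), v ∈ U →
          (p.2 ∈ G.edgeFinset \ E1 p.1 ∧ 2 ≤ etrav (S p.1) p.2 ∧
           ∃ y : V, p.2 = s(v, y) ∧ ∃ (h : G.Adj v y) (q : G.Walk y (hd p.1)),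
             (SimpleGraph.Walk.cons h q).IsPath) := by
        intro v
        by_cases hv : v ∈ U
        swap
        · exact ⟨⟨i0, s(v, v)⟩, fun h => absurd h hv⟩
        obtain ⟨i, hvS⟩ := hS.2.1 v
        have hvP : ∀ j, v ∉ P j := (hUmem v).1 hv
        have hsP : hd i ∈ P i := by
          have h1 : (S i).head? = some (hd i) := by
            rw [hhd]
            exact List.head?_eq_head _
          have h2 : (P i).head? = some (hd i) := by rw [(hP i).2.2.1, h1]
          exact List.mem_of_mem_head? h2
        have hvs : v ≠ hd i := fun h => hvP i (h ▸ hsP)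
        have pw : G.Walk v (hd i) := (hT.isConnected.preconnected v (hd i)).some
        obtain ⟨y, hadj, q, hq⟩ :=
          SimpleGraph.Walk.exists_eq_cons_of_ne hvs (pw.toPath : G.Walk v (hd i))
        have hpath : (SimpleGraph.Walk.cons hadj q).IsPath := hq ▸ pw.toPath.2
        have h1 : 1 ≤ etrav (S i) s(v, y) :=
          one_le_etrav_of_sep hT (S i) (hSwalk i) hadj q hpath hvS
        have hS1 : etrav (S i) s(v, y) ≠ 1 := by
          intro h
          have htrav := ((hP i).2.2.2.2 v y hadj).1 (by rw [trav_eq_etrav]; exact h)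
          have hpos : 0 < trav (P i) v y := by omega
          rw [trav, List.countP_pos_iff] at hpos
          obtain ⟨p, hp, hpred⟩ := hpos
          simp only [decide_eq_true_eq] at hpred
          have hm := mem_of_mem_wsteps (P i) p hp
          rcases hpred with ⟨h1', _⟩ | ⟨_, h2'⟩
          · exact hvP i (h1' ▸ hm.1)
          · exact hvP i (h2' ▸ hm.2)
        refine ⟨⟨i, s(v, y)⟩, fun _ =>
          ⟨?_, by show 2 ≤ etrav (S i) s(v, y); omega, y, rfl, hadj, q, hpath⟩⟩
        show s(v, y) ∈ G.edgeFinset \ E1 i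
        rw [Finset.mem_sdiff]
        refine ⟨by rw [SimpleGraph.mem_edgeFinset, SimpleGraph.mem_edgeSet]; exact hadj, ?_⟩
        rw [hE1, Finset.mem_filter]
        push_neg
        intro _
        exact hS1
      choose F hF using key
      have hinj : ∀ v ∈ U, ∀ w ∈ U, F v = F w → v = w := by
        intro v hv w hw heq
        obtain ⟨-, -, y, hey, hay, qy, hpy⟩ := hF v hv
        have hFw := hF w hw
        rw [← heq] at hFw
        obtain ⟨-, -, z, hez, haz, qz, hpz⟩ := hFw
        by_contra hvw
        have hsym : s(v, y) = s(w, z) := by rw [← hey, hez]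
        rw [Sym2.eq_iff] at hsym
        rcases hsym with ⟨h1', -⟩ | ⟨h1', h2'⟩
        · exact hvw h1'
        · subst h1'
          subst h2'
          have hq : qy = SimpleGraph.Walk.cons haz qz :=
            congrArg Subtype.val
              (hT.IsAcyclic.path_unique ⟨qy, hpy.of_cons⟩
                ⟨SimpleGraph.Walk.cons haz qz, hpz⟩)
          rw [hq] at hpy
          have hnd := hpy.support_nodup
          rw [SimpleGraph.Walk.support_cons, SimpleGraph.Walk.support_cons,
            List.nodup_cons] at hnd
          exact hnd.1 (List.mem_cons_of_mem _ qz.start_mem_support)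
      calc 2 * U.card = ∑ _v ∈ U, 2 := by rw [Finset.sum_const, smul_eq_mul, mul_comm]
        _ ≤ ∑ v ∈ U, etrav (S (F v).1) (F v).2 :=
            Finset.sum_le_sum (fun v hv => (hF v hv).2.1)
        _ = ∑ p ∈ U.image F, etrav (S p.1) p.2 := by
            rw [Finset.sum_image (fun x hx y hy h => hinj x hx y hy h)]
        _ ≤ ∑ p ∈ Finset.univ.sigma (fun i => G.edgeFinset \ E1 i), etrav (S p.1) p.2 := by
            apply Finset.sum_le_sum_of_subset
            intro p hp
            obtain ⟨v, hv, rfl⟩ := Finset.mem_image.1 hp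
            rw [Finset.mem_sigma]
            exact ⟨Finset.mem_univ _, (hF v hv).1⟩
        _ = ∑ i, ∑ e ∈ G.edgeFinset \ E1 i, etrav (S i) e := Finset.sum_sigma _ _ _
    omega
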